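/- Let (t_j)_{j=0}^{κ} be a sequence of complex p×q matrices, A a complex p×q matrix, and (s_j)_{j=0}^{κ+1} the inverse α-Schur transform corresponding to [(t_j), A]. Then the α-reciprocal sequence of (s_j) is given explicitly by s_0^{♯,α} = A^{+} and s_j^{♯,α} = -A^{+} t_{j-1} A^{+} for 1 ≤ j ≤ κ+1, and moreover (s_j^{♯,α})_j^{♯} = s_j^{[+,α]} for all j. -/

import Mathlib

open Matrix BigOperators

def IsMP {m n : Type*} [Fintype m] [Fintype n] (A : Matrix m n ℂ) (B : Matrix n m ℂ) : Prop :=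
  A * B * A = A ∧ B * A * B = B ∧ (A * B)ᴴ = A * B ∧ (B * A)ᴴ = B * A

open Classical in
noncomputable def mp {m n : Type*} [Fintype m] [Fintype n] (A : Matrix m n ℂ) : Matrix n m ℂ :=
  if h : ∃ B, IsMP A B then h.choose else 0

noncomputable def recip {p q : ℕ} (s : ℕ → Matrix (Fin p) (Fin q) ℂ) :
    ℕ → Matrix (Fin q) (Fin p) ℂ
  | 0 => mp (s 0)
  | (j+1) => -(mp (s 0) * ∑ l : Fin (j+1), s (j+1 - l.val) * recip s l.val)
termination_by j => j
decreasing_by exact l.isLt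

noncomputable def shiftA {p q : ℕ} (α : ℂ) (s : ℕ → Matrix (Fin p) (Fin q) ℂ) :
    ℕ → Matrix (Fin p) (Fin q) ℂ
  | 0 => s 0
  | (j+1) => (-α) • s j + s (j+1)

noncomputable def recipA {p q : ℕ} (α : ℂ) (s : ℕ → Matrix (Fin p) (Fin q) ℂ) :
    ℕ → Matrix (Fin q) (Fin p) ℂ :=
  recip (shiftA α s)

/-- the inverse α-Schur transform corresponding to [(t_j), A]. -/
noncomputable def invT {p q : ℕ} (α : ℂ) (t : ℕ → Matrix (Fin p) (Fin q) ℂ)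
    (A : Matrix (Fin p) (Fin q) ℂ) : ℕ → Matrix (Fin p) (Fin q) ℂ
  | 0 => A
  | (j+1) => α ^ (j + 1) • A + ∑ l : Fin (j + 1), α ^ (j - l.val) •
      (A * mp A * ∑ k : Fin (l.val + 1),
        t (l.val - k.val) * mp A *
          ((-α) • (if k.val = 0 then 0 else invT α t A (k.val - 1)) + invT α t A k.val))
termination_by j => j
decreasing_by
  · have hk := k.isLt; have hl := l.isLt; omega
  · have hk := k.isLt; have hl := l.isLt; omega

lemma exists_isMP {m n : Type*} [Fintype m] [Fintype n] [DecidableEq n]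
    (A : Matrix m n ℂ) : ∃ B, IsMP A B := by
  classical
  have hH : (Aᴴ * A).IsHermitian := Matrix.isHermitian_conjTranspose_mul_self A
  set H : Matrix n n ℂ := Aᴴ * A with hHdef
  set U : Matrix n n ℂ := (hH.eigenvectorUnitary : Matrix n n ℂ) with hUdef
  have h1 : star U * U = 1 := Matrix.mem_unitaryGroup_iff'.mp hH.eigenvectorUnitary.2
  set d : n → ℂ := RCLike.ofReal ∘ hH.eigenvalues with hddef
  set e : n → ℂ := fun i =>
    if hH.eigenvalues i = 0 then 0 else (RCLike.ofReal (hH.eigenvalues i))⁻¹ with hedef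
  have hspec : H = U * Matrix.diagonal d * star U := hH.spectral_theorem
  have hmul : ∀ f g : n → ℂ, (U * Matrix.diagonal f * star U) * (U * Matrix.diagonal g * star U)
      = U * Matrix.diagonal (fun i => f i * g i) * star U := by
    intro f g
    calc (U * Matrix.diagonal f * star U) * (U * Matrix.diagonal g * star U)
        = U * (Matrix.diagonal f * ((star U * U) * (Matrix.diagonal g * star U))) := by
          simp only [Matrix.mul_assoc]
      _ = U * Matrix.diagonal (fun i => f i * g i) * star U := by
          rw [h1, one_mul, ← Matrix.mul_assoc (Matrix.diagonal f), Matrix.diagonal_mul_diagonal]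
          simp [Matrix.mul_assoc, Pi.mul_def]
  set Hp : Matrix n n ℂ := U * Matrix.diagonal e * star U with hHpdef
  have hde : ∀ i, d i * e i = e i * d i := fun i => mul_comm _ _
  have hded : ∀ i, d i * e i * d i = d i := by
    intro i
    by_cases h : hH.eigenvalues i = 0 <;>
      simp [hedef, hddef, h]
  have hede : ∀ i, e i * d i * e i = e i := by
    intro i
    by_cases h : hH.eigenvalues i = 0 <;>
      simp [hedef, hddef, h]
  have hHHpH : H * Hp * H = H := by
    rw [hspec, hHpdef, hmul, hmul]
    have : (fun i => (fun i => d i * e i) i * d i) = d := funext hded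
    rw [this]
  have hHpHHp : Hp * H * Hp = Hp := by
    rw [hspec, hHpdef, hmul, hmul]
    have : (fun i => (fun i => e i * d i) i * e i) = e := funext hede
    rw [this]
  have hcomm : H * Hp = Hp * H := by
    rw [hspec, hHpdef, hmul, hmul]
    have : (fun i => d i * e i) = fun i => e i * d i := funext hde
    rw [this]
  have hHpHerm : Hpᴴ = Hp := by
    have hse : star e = e := by
      funext i
      by_cases h : hH.eigenvalues i = 0 <;> simp [hedef, h, ← Complex.ofReal_inv]
    rw [hHpdef, Matrix.star_eq_conjTranspose U]
    simp only [Matrix.conjTranspose_mul, Matrix.conjTranspose_conjTranspose,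
      Matrix.diagonal_conjTranspose, hse, Matrix.mul_assoc]
  have hHerm : Hᴴ = H := hH
  have hHM : H * (1 - Hp * H) = 0 := by
    rw [Matrix.mul_sub, Matrix.mul_one, ← Matrix.mul_assoc, hHHpH, sub_self]
  have hAM : A * (1 - Hp * H) = 0 := by
    have hMH : (1 - Hp * H)ᴴ = 1 - Hp * H := by
      rw [Matrix.conjTranspose_sub, Matrix.conjTranspose_one, Matrix.conjTranspose_mul,
        hHpHerm, hHerm, hcomm]
    have : (A * (1 - Hp * H))ᴴ * (A * (1 - Hp * H)) = 0 := by
      rw [Matrix.conjTranspose_mul, Matrix.mul_assoc, ← Matrix.mul_assoc Aᴴ, ← hHdef,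
        hMH, hHM, Matrix.mul_zero]
    open ComplexOrder in
    exact Matrix.conjTranspose_mul_self_eq_zero.mp this
  have hA : A * (Hp * H) = A := by
    have := hAM
    rw [Matrix.mul_sub, Matrix.mul_one, sub_eq_zero] at this
    exact this.symm
  refine ⟨Hp * Aᴴ, ?_, ?_, ?_, ?_⟩
  · calc A * (Hp * Aᴴ) * A = A * (Hp * H) := by rw [hHdef]; simp only [Matrix.mul_assoc]
      _ = A := hA
  · calc Hp * Aᴴ * A * (Hp * Aᴴ) = Hp * H * Hp * Aᴴ := by
          rw [hHdef]; simp only [Matrix.mul_assoc]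
      _ = Hp * Aᴴ := by rw [hHpHHp]
  · rw [Matrix.conjTranspose_mul, Matrix.conjTranspose_mul, hHpHerm,
      Matrix.conjTranspose_conjTranspose, Matrix.mul_assoc]
  · calc (Hp * Aᴴ * A)ᴴ = (Hp * H)ᴴ := by rw [hHdef, Matrix.mul_assoc]
      _ = H * Hp := by rw [Matrix.conjTranspose_mul, hHpHerm, hHerm]
      _ = Hp * Aᴴ * A := by rw [hcomm, hHdef, ← Matrix.mul_assoc Hp Aᴴ A]

lemma isMP_unique {m n : Type*} [Fintype m] [Fintype n] {A : Matrix m n ℂ}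
    {B C : Matrix n m ℂ} (hB : IsMP A B) (hC : IsMP A C) : B = C := by
  obtain ⟨hB1, hB2, hB3, hB4⟩ := hB
  obtain ⟨hC1, hC2, hC3, hC4⟩ := hC
  have hAB : A * B = A * C := by
    calc A * B = (A * B)ᴴ := hB3.symm
      _ = Bᴴ * Aᴴ := Matrix.conjTranspose_mul A B
      _ = Bᴴ * (A * C * A)ᴴ := by rw [hC1]
      _ = Bᴴ * (Aᴴ * (A * C)) := by rw [Matrix.conjTranspose_mul, hC3]
      _ = (Bᴴ * Aᴴ) * (A * C) := by rw [Matrix.mul_assoc]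
      _ = (A * B)ᴴ * (A * C) := by rw [Matrix.conjTranspose_mul]
      _ = A * B * (A * C) := by rw [hB3]
      _ = (A * B * A) * C := by rw [Matrix.mul_assoc, Matrix.mul_assoc, Matrix.mul_assoc]
      _ = A * C := by rw [hB1]
  have hBA : B * A = C * A := by
    calc B * A = (B * A)ᴴ := hB4.symm
      _ = Aᴴ * Bᴴ := Matrix.conjTranspose_mul B A
      _ = (A * (C * A))ᴴ * Bᴴ := by rw [← Matrix.mul_assoc, hC1]
      _ = ((C * A)ᴴ * Aᴴ) * Bᴴ := by rw [Matrix.conjTranspose_mul]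
      _ = (C * A) * (Aᴴ * Bᴴ) := by rw [hC4, Matrix.mul_assoc]
      _ = (C * A) * (B * A)ᴴ := by rw [Matrix.conjTranspose_mul]
      _ = C * (A * (B * A)) := by rw [hB4, Matrix.mul_assoc]
      _ = C * A := by rw [← Matrix.mul_assoc A B A, hB1]
  calc B = B * A * B := hB2.symm
    _ = B * (A * C) := by rw [Matrix.mul_assoc, hAB]
    _ = (B * A) * C := by rw [Matrix.mul_assoc]
    _ = C * A * C := by rw [hBA]
    _ = C := hC2

open Classical in
lemma isMP_mp {m n : Type*} [Fintype m] [Fintype n] [DecidableEq n] (A : Matrix m n ℂ) :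
    IsMP A (mp A) := by
  have h : ∃ B, IsMP A B := exists_isMP A
  rw [mp, dif_pos h]
  exact h.choose_spec

lemma isMP_mp_rev {m n : Type*} [Fintype m] [Fintype n] [DecidableEq n] (A : Matrix m n ℂ) :
    IsMP (mp A) A := by
  obtain ⟨h1, h2, h3, h4⟩ := isMP_mp A
  exact ⟨h2, h1, h4, h3⟩

lemma mp_mp {m n : Type*} [Fintype m] [Fintype n] [DecidableEq m] [DecidableEq n]
    (A : Matrix m n ℂ) : mp (mp A) = A :=
  isMP_unique (isMP_mp (mp A)) (isMP_mp_rev A)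

section Main

variable {p q : ℕ}

private noncomputable def Cc (α : ℂ) (t : ℕ → Matrix (Fin p) (Fin q) ℂ)
    (A : Matrix (Fin p) (Fin q) ℂ) (j : ℕ) : Matrix (Fin p) (Fin q) ℂ :=
  ∑ k ∈ Finset.range (j+1), t (j - k) * mp A * shiftA α (invT α t A) k

lemma invT_zero (α : ℂ) (t : ℕ → Matrix (Fin p) (Fin q) ℂ) (A : Matrix (Fin p) (Fin q) ℂ) :
    invT α t A 0 = A := by rw [invT]

lemma shiftA_zero (α : ℂ) (s : ℕ → Matrix (Fin p) (Fin q) ℂ) : shiftA α s 0 = s 0 := rfl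

lemma shiftA_succ (α : ℂ) (s : ℕ → Matrix (Fin p) (Fin q) ℂ) (j : ℕ) :
    shiftA α s (j+1) = (-α) • s j + s (j+1) := rfl

lemma recip_zero (s : ℕ → Matrix (Fin p) (Fin q) ℂ) : recip s 0 = mp (s 0) := by rw [recip]

lemma recip_succ (s : ℕ → Matrix (Fin p) (Fin q) ℂ) (j : ℕ) :
    recip s (j+1) = -(mp (s 0) * ∑ l ∈ Finset.range (j+1), s (j+1-l) * recip s l) := by
  rw [recip, ← Fin.sum_univ_eq_sum_range (fun l => s (j+1-l) * recip s l) (j+1)]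

lemma ite_shift (α : ℂ) (t : ℕ → Matrix (Fin p) (Fin q) ℂ) (A : Matrix (Fin p) (Fin q) ℂ)
    (k : ℕ) : (-α) • (if k = 0 then 0 else invT α t A (k-1)) + invT α t A k
      = shiftA α (invT α t A) k := by
  cases k with
  | zero => simp [shiftA]
  | succ k => simp [shiftA]

lemma invT_succ (α : ℂ) (t : ℕ → Matrix (Fin p) (Fin q) ℂ) (A : Matrix (Fin p) (Fin q) ℂ)
    (j : ℕ) : invT α t A (j+1)
      = α^(j+1) • A + ∑ l ∈ Finset.range (j+1), α^(j-l) • (A * mp A * Cc α t A l) := by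
  rw [invT, ← Fin.sum_univ_eq_sum_range (fun l => α^(j-l) • (A * mp A * Cc α t A l)) (j+1)]
  congr 1
  refine Finset.sum_congr rfl fun l _ => ?_
  have : Cc α t A l.val = ∑ k : Fin (l.val + 1),
      t (l.val - k.val) * mp A * shiftA α (invT α t A) k.val := by
    rw [Cc, ← Fin.sum_univ_eq_sum_range (fun k => t (l.val - k) * mp A
      * shiftA α (invT α t A) k) (l.val+1)]
  rw [this]
  congr 2
  exact Finset.sum_congr rfl fun k _ => by rw [ite_shift]

lemma u_succ (α : ℂ) (t : ℕ → Matrix (Fin p) (Fin q) ℂ) (A : Matrix (Fin p) (Fin q) ℂ)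
    (j : ℕ) : shiftA α (invT α t A) (j+1) = A * mp A * Cc α t A j := by
  cases j with
  | zero =>
    rw [shiftA_succ, invT_zero, invT_succ]
    simp
  | succ j =>
    rw [shiftA_succ, invT_succ α t A j, invT_succ α t A (j+1),
      Finset.sum_range_succ (fun l => α^(j+1-l) • (A * mp A * Cc α t A l)) (j+1)]
    have h1 : ∀ l ∈ Finset.range (j+1), α ^ (j+1-l) • (A * mp A * Cc α t A l)
        = α • (α ^ (j-l) • (A * mp A * Cc α t A l)) := by
      intro l hl
      rw [smul_smul, ← pow_succ']
      congr 2
      have := Finset.mem_range.mp hl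
      omega
    rw [Finset.sum_congr rfl h1, ← Finset.smul_sum]
    have h2 : α ^ (j+1+1) • A = α • (α^(j+1) • A) := by rw [smul_smul, ← pow_succ']
    rw [h2]
    simp only [Nat.sub_self, pow_zero, one_smul, smul_add, neg_smul]
    abel

end Main

private lemma sum_triangle {M : Type*} [AddCommMonoid M] (n : ℕ) (f : ℕ → ℕ → M) :
    ∑ l ∈ Finset.range (n+1), ∑ k ∈ Finset.range (n+1-l), f k l
      = ∑ m ∈ Finset.range (n+1), ∑ l ∈ Finset.range (m+1), f (m-l) l := by
  induction n with
  | zero => simp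
  | succ n ih =>
    rw [Finset.sum_range_succ (fun l => ∑ k ∈ Finset.range (n+1+1-l), f k l) (n+1)]
    have h1 : ∀ l ∈ Finset.range (n+1), ∑ k ∈ Finset.range (n+1+1-l), f k l
        = ∑ k ∈ Finset.range (n+1-l), f k l + f (n+1-l) l := by
      intro l hl
      have h2 : n+1+1-l = (n+1-l)+1 := by have := Finset.mem_range.mp hl; omega
      rw [h2, Finset.sum_range_succ]
    rw [Finset.sum_congr rfl h1, Finset.sum_add_distrib, ih,
      Finset.sum_range_succ (fun m => ∑ l ∈ Finset.range (m+1), f (m-l) l) (n+1),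
      Finset.sum_range_succ (fun l => f (n+1-l) l) (n+1)]
    have h3 : n+1+1-(n+1) = 1 := by omega
    have h4 : n+1-(n+1) = 0 := by omega
    rw [h3, h4, Finset.sum_range_one]
    abel

private lemma absorb {p q k : ℕ} (A : Matrix (Fin p) (Fin q) ℂ) (P : Matrix (Fin q) (Fin p) ℂ)
    (hPAP : P * (A * P) = P) (X : Matrix (Fin p) (Fin k) ℂ) :
    P * (A * (P * X)) = P * X := by
  rw [← Matrix.mul_assoc A P X, ← Matrix.mul_assoc P (A*P) X, hPAP]

private lemma key_sum {p q : ℕ} (t : ℕ → Matrix (Fin p) (Fin q) ℂ)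
    (A : Matrix (Fin p) (Fin q) ℂ) (u : ℕ → Matrix (Fin p) (Fin q) ℂ)
    (r : ℕ → Matrix (Fin q) (Fin p) ℂ) (P : Matrix (Fin q) (Fin p) ℂ)
    (hu0 : u 0 = A) (hr0 : r 0 = P)
    (hrs : ∀ i : ℕ, r (i+1) = -(P * ∑ l ∈ Finset.range (i+1), u (i+1-l) * r l))
    (hPAP : P * (A * P) = P) (j : ℕ) :
    ∑ l ∈ Finset.range (j+1), (∑ k ∈ Finset.range (j+1-l), t (j-l-k) * P * u k) * r l
      = t j * P * (A * P) := by
  have step1 : ∀ l ∈ Finset.range (j+1), (∑ k ∈ Finset.range (j+1-l), t (j-l-k) * P * u k) * r l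
      = ∑ k ∈ Finset.range (j+1-l), t (j-l-k) * P * u k * r l := by
    intro l _
    rw [Matrix.sum_mul]
  rw [Finset.sum_congr rfl step1, sum_triangle j (fun k l => t (j-l-k) * P * u k * r l)]
  have step2 : ∀ m ∈ Finset.range (j+1),
      ∑ l ∈ Finset.range (m+1), t (j-l-(m-l)) * P * u (m-l) * r l
        = t (j-m) * P * ∑ l ∈ Finset.range (m+1), u (m-l) * r l := by
    intro m hm
    rw [Matrix.mul_sum]
    refine Finset.sum_congr rfl fun l hl => ?_
    have h3 : j - l - (m-l) = j - m := by
      have := Finset.mem_range.mp hm; have := Finset.mem_range.mp hl; omega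
    rw [h3, Matrix.mul_assoc (t (j-m) * P)]
  rw [Finset.sum_congr rfl step2]
  have step3 : ∀ m ∈ Finset.range (j+1),
      t (j-m) * P * ∑ l ∈ Finset.range (m+1), u (m-l) * r l
        = if m = 0 then t j * P * (A * P) else 0 := by
    intro m _
    cases m with
    | zero => simp [Finset.sum_range_one, hu0, hr0]
    | succ i =>
      simp only [if_neg (Nat.succ_ne_zero i)]
      rw [Finset.sum_range_succ]
      have hlast : u (i+1-(i+1)) * r (i+1)
          = -(A * (P * ∑ l ∈ Finset.range (i+1), u (i+1-l) * r l)) := by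
        rw [Nat.sub_self, hu0, hrs, Matrix.mul_neg]
      rw [hlast, Matrix.mul_add, Matrix.mul_neg,
        Matrix.mul_assoc (t (j-(i+1))) P (A * (P * ∑ l ∈ Finset.range (i+1), u (i+1-l) * r l)),
        absorb A P hPAP, ← Matrix.mul_assoc (t (j-(i+1))) P (∑ l ∈ Finset.range (i+1), u (i+1-l) * r l)]
      simp
  rw [Finset.sum_congr rfl step3]
  simp

private lemma r_succ {p q : ℕ} (α : ℂ) (t : ℕ → Matrix (Fin p) (Fin q) ℂ)
    (A : Matrix (Fin p) (Fin q) ℂ) (j : ℕ) :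
    recip (shiftA α (invT α t A)) (j+1) = -(mp A * t j * mp A) := by
  have hu0 : shiftA α (invT α t A) 0 = A := by rw [shiftA_zero, invT_zero]
  have hPAP : mp A * (A * mp A) = mp A := by
    rw [← Matrix.mul_assoc]; exact (isMP_mp A).2.1
  have hrs : ∀ i : ℕ, recip (shiftA α (invT α t A)) (i+1)
      = -(mp A * ∑ l ∈ Finset.range (i+1),
          shiftA α (invT α t A) (i+1-l) * recip (shiftA α (invT α t A)) l) := by
    intro i; rw [recip_succ, hu0]
  have hterm : ∀ l ∈ Finset.range (j+1),
      shiftA α (invT α t A) (j+1-l) * recip (shiftA α (invT α t A)) l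
        = A * mp A * Cc α t A (j-l) * recip (shiftA α (invT α t A)) l := by
    intro l hl
    have h : j+1-l = (j-l)+1 := by have := Finset.mem_range.mp hl; omega
    rw [h, u_succ]
  rw [hrs j, Finset.sum_congr rfl hterm]
  have hpull : ∑ l ∈ Finset.range (j+1),
      A * mp A * Cc α t A (j-l) * recip (shiftA α (invT α t A)) l
        = A * mp A * ∑ l ∈ Finset.range (j+1),
            Cc α t A (j-l) * recip (shiftA α (invT α t A)) l := by
    rw [Matrix.mul_sum]
    exact Finset.sum_congr rfl fun l _ => Matrix.mul_assoc _ _ _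
  have hkey : ∑ l ∈ Finset.range (j+1), Cc α t A (j-l) * recip (shiftA α (invT α t A)) l
      = t j * mp A * (A * mp A) := by
    have hbridge : ∀ l ∈ Finset.range (j+1),
        Cc α t A (j-l) * recip (shiftA α (invT α t A)) l
          = (∑ k ∈ Finset.range (j+1-l), t (j-l-k) * mp A * shiftA α (invT α t A) k)
              * recip (shiftA α (invT α t A)) l := by
      intro l hl
      have h : (j-l)+1 = j+1-l := by have := Finset.mem_range.mp hl; omega
      rw [Cc, h]
    rw [Finset.sum_congr rfl hbridge]
    exact key_sum t A _ _ (mp A) hu0 (by rw [recip_zero, hu0]) hrs hPAP j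
  rw [hpull, hkey]
  simp only [Matrix.mul_assoc]
  rw [hPAP, absorb A (mp A) hPAP (t j * mp A)]

private lemma recip_recip {p q : ℕ} (α : ℂ) (t : ℕ → Matrix (Fin p) (Fin q) ℂ)
    (A : Matrix (Fin p) (Fin q) ℂ) (j : ℕ) :
    recip (recip (shiftA α (invT α t A))) j = shiftA α (invT α t A) j := by
  induction j using Nat.strong_induction_on with
  | _ n ih =>
    cases n with
    | zero =>
      rw [recip_zero, recip_zero, shiftA_zero, invT_zero, mp_mp]
    | succ j =>
      rw [recip_succ]
      have h0 : recip (shiftA α (invT α t A)) 0 = mp A := by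
        rw [recip_zero, shiftA_zero, invT_zero]
      rw [h0, mp_mp]
      have hterm : ∀ l ∈ Finset.range (j+1),
          recip (shiftA α (invT α t A)) (j+1-l) * recip (recip (shiftA α (invT α t A))) l
            = -(mp A * (t (j-l) * (mp A * shiftA α (invT α t A) l))) := by
        intro l hl
        have hl' := Finset.mem_range.mp hl
        have h : j+1-l = (j-l)+1 := by omega
        rw [h, r_succ, ih l (by omega), Matrix.neg_mul]
        congr 1
        simp only [Matrix.mul_assoc]
      rw [Finset.sum_congr rfl hterm]
      have hsum : ∑ l ∈ Finset.range (j+1),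
          -(mp A * (t (j-l) * (mp A * shiftA α (invT α t A) l)))
            = -(mp A * ∑ l ∈ Finset.range (j+1),
                t (j-l) * (mp A * shiftA α (invT α t A) l)) := by
        rw [Matrix.mul_sum, Finset.sum_neg_distrib]
      rw [hsum, Matrix.mul_neg, neg_neg, u_succ, Cc]
      have hres : ∑ l ∈ Finset.range (j+1), t (j-l) * (mp A * shiftA α (invT α t A) l)
          = ∑ l ∈ Finset.range (j+1), t (j-l) * mp A * shiftA α (invT α t A) l :=
        Finset.sum_congr rfl fun l _ => (Matrix.mul_assoc _ _ _).symm
      rw [hres, ← Matrix.mul_assoc]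

/-- Lemma 10.5: the α-reciprocal sequence of the inverse α-Schur transform and
    its reciprocal sequence are given explicitly. -/
theorem stmt16 {p q : ℕ} (α : ℂ) (κ : ℕ∞)
    (t : ℕ → Matrix (Fin p) (Fin q) ℂ) (A : Matrix (Fin p) (Fin q) ℂ) :
    recipA α (invT α t A) 0 = mp A ∧
    (∀ j : ℕ, 1 ≤ j → (j : ℕ∞) ≤ κ + 1 →
      recipA α (invT α t A) j = -(mp A * t (j - 1) * mp A)) ∧
    (∀ j : ℕ, (j : ℕ∞) ≤ κ + 1 →
      recip (recipA α (invT α t A)) j = shiftA α (invT α t A) j) := by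
  refine ⟨?_, ?_, ?_⟩
  · rw [recipA, recip_zero, shiftA_zero, invT_zero]
  · intro j hj _
    obtain ⟨i, rfl⟩ : ∃ i, j = i+1 := ⟨j-1, by omega⟩
    rw [recipA, r_succ]
    norm_num
  · intro j _
    rw [recipA]
    exact recip_recip α t A j
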